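/- Let n ≥ 2 and let μ : 𝓗(S^{n−1}) → ℝ be a functional on the set of restrictions of support functions to the sphere. Then μ is sequentially continuous with respect to τ-convergence if and only if μ is sequentially continuous with respect to the uniform norm ‖·‖_∞ on S^{n−1}. -/

import Mathlib

open MeasureTheory Filter Topology Metric Set
open scoped InnerProductSpace ENNReal NNReal Pointwise

noncomputable section

/-- Euclidean space `ℝ^n`. -/
abbrev Eucl (n : ℕ) : Type := EuclideanSpace ℝ (Fin n)

/-- The unit sphere `S^{n-1} ⊆ ℝ^n`. -/
abbrev Sph (n : ℕ) := Metric.sphere (0 : Eucl n) 1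

/-- The Hausdorff measure `H^{n-1}` on the unit sphere of `ℝ^n`. -/
def sphMeasure (n : ℕ) : Measure (Sph n) := μH[(n : ℝ) - 1]

open Classical in
/-- The 1-homogeneous extension of a function on the sphere to `ℝ^n`. -/
def homExt {n : ℕ} (u : Sph n → ℝ) (x : Eucl n) : ℝ :=
  if hx : x = 0 then 0
  else ‖x‖ * u ⟨‖x‖⁻¹ • x, by
    rw [mem_sphere_zero_iff_norm, norm_smul, norm_inv, norm_norm,
      inv_mul_cancel₀ (norm_ne_zero_iff.mpr hx)]⟩

/-- `u` is differentiable at `x ∈ S^{n-1}` (as a function on the sphere): its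
1-homogeneous extension is differentiable at `x`. -/
def SphDiffAt {n : ℕ} (u : Sph n → ℝ) (x : Sph n) : Prop :=
  DifferentiableAt ℝ (homExt u) (x : Eucl n)

/-- The spherical gradient of `u` at `x ∈ S^{n-1}`: the gradient of the
1-homogeneous extension minus its radial component.  It is the tangent vector
to the sphere representing the differential of `u` at `x`. -/
def sphGrad {n : ℕ} (u : Sph n → ℝ) (x : Sph n) : Eucl n :=
  gradient (homExt u) (x : Eucl n) - u x • (x : Eucl n)

/-- `u : S^{n-1} → ℝ` is Lipschitz. -/
def IsLip {n : ℕ} (u : Sph n → ℝ) : Prop := ∃ L : ℝ≥0, LipschitzWith L u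

/-- τ-convergence of a sequence of functions on the sphere: uniform convergence,
`H^{n-1}`-a.e. convergence of the spherical gradients, and a uniform a.e. bound
on the norms of the spherical gradients. -/
def TauTendsto {n : ℕ} (u_ : ℕ → Sph n → ℝ) (u : Sph n → ℝ) : Prop :=
  TendstoUniformly u_ u atTop ∧
  (∀ᵐ x ∂sphMeasure n, Tendsto (fun i => sphGrad (u_ i) x) atTop (𝓝 (sphGrad u x))) ∧
  ∃ C : ℝ, 0 < C ∧ ∀ i, ∀ᵐ x ∂sphMeasure n, ‖sphGrad (u_ i) x‖ ≤ C

/-- `μ` is a valuation on `Lip(S^{n-1})`: it is finitely additive with respect to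
pointwise maximum and minimum of Lipschitz functions. -/
def IsValuation {n : ℕ} (μ : (Sph n → ℝ) → ℝ) : Prop :=
  ∀ u v : Sph n → ℝ, IsLip u → IsLip v → μ (u ⊔ v) + μ (u ⊓ v) = μ u + μ v

/-- `μ` is continuous on `Lip(S^{n-1})` with respect to τ-convergence. -/
def TauContinuous {n : ℕ} (μ : (Sph n → ℝ) → ℝ) : Prop :=
  ∀ (u_ : ℕ → Sph n → ℝ) (u : Sph n → ℝ), (∀ i, IsLip (u_ i)) → IsLip u →
    TauTendsto u_ u → Tendsto (fun i => μ (u_ i)) atTop (𝓝 (μ u))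

/-- A rotation `φ ∈ O(n)` acting on the sphere. -/
def sphMap {n : ℕ} (φ : Eucl n ≃ₗᵢ[ℝ] Eucl n) (x : Sph n) : Sph n :=
  ⟨φ x, by
    rw [mem_sphere_zero_iff_norm, φ.norm_map]
    exact mem_sphere_zero_iff_norm.mp x.2⟩

/-- `μ` is rotation invariant: `μ (u ∘ φ) = μ u` for every `φ ∈ O(n)`. -/
def RotationInvariant {n : ℕ} (μ : (Sph n → ℝ) → ℝ) : Prop :=
  ∀ u : Sph n → ℝ, IsLip u → ∀ φ : Eucl n ≃ₗᵢ[ℝ] Eucl n, μ (u ∘ sphMap φ) = μ u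

/-- `μ` is dot product invariant: invariant under adding restrictions to the
sphere of linear functions `⟨·, y⟩`. -/
def DotProductInvariant {n : ℕ} (μ : (Sph n → ℝ) → ℝ) : Prop :=
  ∀ u : Sph n → ℝ, IsLip u → ∀ y : Eucl n,
    μ (fun x => u x + ⟪(x : Eucl n), y⟫_ℝ) = μ u

/-- `μ` is homogeneous of degree `i`. -/
def IsHomogeneous {n : ℕ} (μ : (Sph n → ℝ) → ℝ) (i : ℕ) : Prop :=
  ∀ u : Sph n → ℝ, IsLip u → ∀ lam : ℝ, 0 < lam →
    μ (fun x => lam * u x) = lam ^ i * μ u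

/-- The support function of a subset of `ℝ^n`. -/
def suppFn {n : ℕ} (K : Set (Eucl n)) (x : Eucl n) : ℝ :=
  sSup ((fun y => ⟪x, y⟫_ℝ) '' K)

/-- A convex body: a nonempty compact convex subset of `ℝ^n`. -/
def IsConvexBody {n : ℕ} (K : Set (Eucl n)) : Prop :=
  K.Nonempty ∧ IsCompact K ∧ Convex ℝ K

/-- `h` belongs to `𝓗(S^{n-1})`: `h` is the restriction to the sphere of the
support function of some convex body. -/
def IsSuppRestriction {n : ℕ} (h : Sph n → ℝ) : Prop :=
  ∃ K : Set (Eucl n), IsConvexBody K ∧ ∀ x : Sph n, h x = suppFn K (x : Eucl n)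

set_option maxHeartbeats 1000000

namespace TauProofAux

/-! ### Support function basics -/

lemma isGreatest_suppFn {n : ℕ} {K : Set (Eucl n)} (hK : IsConvexBody K) (x : Eucl n) :
    IsGreatest ((fun y => ⟪x, y⟫_ℝ) '' K) (suppFn K x) := by
  obtain ⟨hne, hcomp, -⟩ := hK
  have hcont : Continuous fun y : Eucl n => ⟪x, y⟫_ℝ := continuous_const.inner continuous_id
  obtain ⟨y, hyK, hy⟩ := hcomp.exists_isMaxOn hne hcont.continuousOn
  rw [isMaxOn_iff] at hy
  have hg : IsGreatest ((fun y => ⟪x, y⟫_ℝ) '' K) ⟪x, y⟫_ℝ :=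
    ⟨mem_image_of_mem _ hyK, by rintro _ ⟨z, hz, rfl⟩; exact hy z hz⟩
  have hs : sSup ((fun y => ⟪x, y⟫_ℝ) '' K) = ⟪x, y⟫_ℝ := hg.csSup_eq
  unfold suppFn
  rw [hs]
  exact hg

lemma suppFn_le {n : ℕ} {K : Set (Eucl n)} (hK : IsConvexBody K) {x : Eucl n}
    {z : Eucl n} (hz : z ∈ K) : ⟪x, z⟫_ℝ ≤ suppFn K x :=
  (isGreatest_suppFn hK x).2 (mem_image_of_mem _ hz)

lemma suppFn_attained {n : ℕ} {K : Set (Eucl n)} (hK : IsConvexBody K) (x : Eucl n) :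
    ∃ y ∈ K, suppFn K x = ⟪x, y⟫_ℝ := by
  obtain ⟨y, hy, hxy⟩ := (isGreatest_suppFn hK x).1
  exact ⟨y, hy, hxy.symm⟩

lemma suppFn_smul {n : ℕ} {K : Set (Eucl n)} (hK : IsConvexBody K) (x : Eucl n)
    {t : ℝ} (ht : 0 ≤ t) : suppFn K (t • x) = t * suppFn K x := by
  obtain ⟨y, hy, hxy⟩ := suppFn_attained hK (t • x)
  obtain ⟨y', hy', hxy'⟩ := suppFn_attained hK x
  apply le_antisymm
  · rw [hxy, real_inner_smul_left]
    exact mul_le_mul_of_nonneg_left (suppFn_le hK hy) ht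
  · rw [hxy']
    calc t * ⟪x, y'⟫_ℝ = ⟪t • x, y'⟫_ℝ := (real_inner_smul_left _ _ _).symm
      _ ≤ suppFn K (t • x) := suppFn_le hK hy'

lemma suppFn_zero {n : ℕ} {K : Set (Eucl n)} (hK : IsConvexBody K) : suppFn K 0 = 0 := by
  have h := suppFn_smul hK (0 : Eucl n) (le_refl (0:ℝ))
  simpa using h

lemma abs_suppFn_le {n : ℕ} {K : Set (Eucl n)} (hK : IsConvexBody K) {R : ℝ}
    (hR : ∀ y ∈ K, ‖y‖ ≤ R) (x : Eucl n) : |suppFn K x| ≤ R * ‖x‖ := by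
  obtain ⟨y, hy, hxy⟩ := suppFn_attained hK x
  rw [hxy]
  calc |⟪x, y⟫_ℝ| ≤ ‖x‖ * ‖y‖ := abs_real_inner_le_norm x y
    _ ≤ ‖x‖ * R := mul_le_mul_of_nonneg_left (hR y hy) (norm_nonneg x)
    _ = R * ‖x‖ := mul_comm _ _

lemma suppFn_lipschitz {n : ℕ} {K : Set (Eucl n)} (hK : IsConvexBody K) {R : ℝ≥0}
    (hR : ∀ y ∈ K, ‖y‖ ≤ (R : ℝ)) : LipschitzWith R (suppFn K) := by
  apply LipschitzWith.of_dist_le_mul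
  intro x x'
  rw [Real.dist_eq, dist_eq_norm, abs_sub_le_iff]
  have key : ∀ a b : Eucl n, suppFn K a - suppFn K b ≤ (R : ℝ) * ‖a - b‖ := by
    intro a b
    obtain ⟨y, hy, hxy⟩ := suppFn_attained hK a
    have h1 : ⟪b, y⟫_ℝ ≤ suppFn K b := suppFn_le hK hy
    have h2 : ⟪a - b, y⟫_ℝ ≤ (R:ℝ) * ‖a - b‖ := by
      calc ⟪a - b, y⟫_ℝ ≤ |⟪a - b, y⟫_ℝ| := le_abs_self _
        _ ≤ ‖a - b‖ * ‖y‖ := abs_real_inner_le_norm _ _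
        _ ≤ ‖a - b‖ * R := mul_le_mul_of_nonneg_left (hR y hy) (norm_nonneg _)
        _ = (R:ℝ) * ‖a - b‖ := mul_comm _ _
    have h3 : ⟪a, y⟫_ℝ = ⟪b, y⟫_ℝ + ⟪a - b, y⟫_ℝ := by
      rw [← inner_add_left]; norm_num
    rw [hxy]
    linarith
  constructor
  · exact key x x'
  · have := key x' x
    rwa [norm_sub_rev] at this

lemma suppFn_convexOn {n : ℕ} {K : Set (Eucl n)} (hK : IsConvexBody K) :
    ConvexOn ℝ univ (suppFn K) := by
  refine ⟨convex_univ, ?_⟩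
  intro x _ x' _ a b ha hb hab
  obtain ⟨y, hy, hxy⟩ := suppFn_attained hK (a • x + b • x')
  rw [hxy, inner_add_left, real_inner_smul_left, real_inner_smul_left]
  have h1 : ⟪x, y⟫_ℝ ≤ suppFn K x := suppFn_le hK hy
  have h2 : ⟪x', y⟫_ℝ ≤ suppFn K x' := suppFn_le hK hy
  have := mul_le_mul_of_nonneg_left h1 ha
  have := mul_le_mul_of_nonneg_left h2 hb
  simp only [smul_eq_mul]
  linarith

lemma homExt_eq_suppFn {n : ℕ} {K : Set (Eucl n)} (hK : IsConvexBody K)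
    {h : Sph n → ℝ} (hh : ∀ x : Sph n, h x = suppFn K (x : Eucl n)) :
    homExt h = suppFn K := by
  funext x
  by_cases hx : x = 0
  · subst hx
    rw [homExt, dif_pos rfl, suppFn_zero hK]
  · rw [homExt, dif_neg hx, hh]
    have hxn : (0:ℝ) < ‖x‖ := norm_pos_iff.mpr hx
    have h1 : suppFn K ((‖x‖⁻¹ : ℝ) • x) = ‖x‖⁻¹ * suppFn K x :=
      suppFn_smul hK x (by positivity)
    rw [h1]
    field_simp

/-! ### Convexity and gradients -/

lemma fderiv_eq_inner_gradient {n : ℕ} {f : Eucl n → ℝ} {x v : Eucl n} :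
    fderiv ℝ f x v = ⟪gradient f x, v⟫_ℝ := by
  have : gradient f x = (InnerProductSpace.toDual ℝ (Eucl n)).symm (fderiv ℝ f x) := rfl
  rw [this, InnerProductSpace.toDual_symm_apply]

lemma hasDerivAt_line {n : ℕ} {g : Eucl n → ℝ} {x : Eucl n}
    (hd : DifferentiableAt ℝ g x) (v : Eucl n) :
    HasDerivAt (fun t : ℝ => g (x + t • v)) (fderiv ℝ g x v) 0 := by
  have h1 : HasDerivAt (fun t : ℝ => x + t • v) v 0 := by
    simpa using ((hasDerivAt_id (0 : ℝ)).smul_const v).const_add x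
  have h2 : HasFDerivAt g (fderiv ℝ g x) (x + (0 : ℝ) • v) := by
    simpa using hd.hasFDerivAt
  exact h2.comp_hasDerivAt 0 h1

lemma convex_fderiv_le {n : ℕ} {g : Eucl n → ℝ} (hg : ConvexOn ℝ univ g) {x : Eucl n}
    (hd : DifferentiableAt ℝ g x) (v : Eucl n) :
    fderiv ℝ g x v ≤ g (x + v) - g x := by
  have hslope : Tendsto (slope (fun t : ℝ => g (x + t • v)) 0) (𝓝[>] 0)
      (𝓝 (fderiv ℝ g x v)) :=
    (hasDerivAt_iff_tendsto_slope.1 (hasDerivAt_line hd v)).mono_left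
      (nhdsWithin_mono 0 fun t ht => ne_of_gt ht)
  refine le_of_tendsto hslope ?_
  filter_upwards [Ioc_mem_nhdsGT (one_pos : (0:ℝ) < 1)] with t ht
  have ht0 : 0 < t := ht.1
  have ha : (0:ℝ) ≤ 1 - t := by linarith [ht.2]
  have hab : (1 - t) + t = 1 := by ring
  have key := hg.2 (mem_univ x) (mem_univ (x + v)) ha ht0.le hab
  have harg : (1 - t) • x + t • (x + v) = x + t • v := by
    rw [smul_add, sub_smul, one_smul]; abel
  rw [harg, smul_eq_mul, smul_eq_mul] at key
  have hval : slope (fun t : ℝ => g (x + t • v)) 0 t = (g (x + t • v) - g x) / t := by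
    rw [slope_def_field]
    simp
  rw [hval, div_le_iff₀ ht0]
  nlinarith [key]

lemma fderiv_apply_tendsto {n : ℕ} {f_ : ℕ → Eucl n → ℝ} {f : Eucl n → ℝ}
    (hc_ : ∀ i, ConvexOn ℝ univ (f_ i)) (hc : ConvexOn ℝ univ f)
    (hptw : ∀ z, Tendsto (fun i => f_ i z) atTop (𝓝 (f z)))
    {x : Eucl n} (hd_ : ∀ i, DifferentiableAt ℝ (f_ i) x)
    (hd : DifferentiableAt ℝ f x) (w : Eucl n) :
    Tendsto (fun i => fderiv ℝ (f_ i) x w) atTop (𝓝 (fderiv ℝ f x w)) := by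
  rw [Metric.tendsto_nhds]
  intro ε hε
  set d := fderiv ℝ f x w with hdd
  have hslope : Tendsto (slope (fun u : ℝ => f (x + u • w)) 0) (𝓝[≠] 0) (𝓝 d) :=
    hasDerivAt_iff_tendsto_slope.1 (hasDerivAt_line hd w)
  have hpos : ∃ t : ℝ, 0 < t ∧ |(f (x + t • w) - f x) / t - d| < ε / 4 := by
    have h1 : Tendsto (slope (fun u : ℝ => f (x + u • w)) 0) (𝓝[>] 0) (𝓝 d) :=
      hslope.mono_left (nhdsWithin_mono 0 fun t ht => ne_of_gt ht)
    obtain ⟨t, ht2, ht1⟩ :=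
      ((Metric.tendsto_nhds.1 h1 (ε/4) (by positivity)).and self_mem_nhdsWithin).exists
    refine ⟨t, ht1, ?_⟩
    have hval : slope (fun u : ℝ => f (x + u • w)) 0 t = (f (x + t • w) - f x) / t := by
      rw [slope_def_field]; simp
    rw [hval, Real.dist_eq] at ht2
    exact ht2
  have hneg : ∃ t : ℝ, t < 0 ∧ |(f (x + t • w) - f x) / t - d| < ε / 4 := by
    have h1 : Tendsto (slope (fun u : ℝ => f (x + u • w)) 0) (𝓝[<] 0) (𝓝 d) :=
      hslope.mono_left (nhdsWithin_mono 0 fun t ht => ne_of_lt ht)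
    obtain ⟨t, ht2, ht1⟩ :=
      ((Metric.tendsto_nhds.1 h1 (ε/4) (by positivity)).and self_mem_nhdsWithin).exists
    refine ⟨t, ht1, ?_⟩
    have hval : slope (fun u : ℝ => f (x + u • w)) 0 t = (f (x + t • w) - f x) / t := by
      rw [slope_def_field]; simp
    rw [hval, Real.dist_eq] at ht2
    exact ht2
  obtain ⟨t, ht0, htc⟩ := hpos
  obtain ⟨s, hs0, hsc⟩ := hneg
  have hbound : ∀ i, (f_ i (x + s • w) - f_ i x) / s ≤ fderiv ℝ (f_ i) x w ∧
      fderiv ℝ (f_ i) x w ≤ (f_ i (x + t • w) - f_ i x) / t := by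
    intro i
    have h1 := convex_fderiv_le (hc_ i) (hd_ i) (t • w)
    have h2 := convex_fderiv_le (hc_ i) (hd_ i) (s • w)
    rw [ContinuousLinearMap.map_smul, smul_eq_mul] at h1 h2
    constructor
    · rw [div_le_iff_of_neg hs0]
      nlinarith [h2]
    · rw [le_div_iff₀ ht0]
      nlinarith [h1]
  have hut : Tendsto (fun i => (f_ i (x + t • w) - f_ i x) / t) atTop
      (𝓝 ((f (x + t • w) - f x) / t)) := ((hptw _).sub (hptw x)).div_const t
  have hus : Tendsto (fun i => (f_ i (x + s • w) - f_ i x) / s) atTop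
      (𝓝 ((f (x + s • w) - f x) / s)) := ((hptw _).sub (hptw x)).div_const s
  filter_upwards [Metric.tendsto_nhds.1 hut (ε/4) (by positivity),
    Metric.tendsto_nhds.1 hus (ε/4) (by positivity)] with i h1 h2
  have hb := hbound i
  rw [Real.dist_eq] at h1 h2 ⊢
  have e1 := abs_lt.1 h1
  have e2 := abs_lt.1 h2
  have e3 := abs_lt.1 htc
  have e4 := abs_lt.1 hsc
  rw [abs_lt]
  constructor <;> [linarith [hb.1]; linarith [hb.2]]

lemma gradient_tendsto {n : ℕ} {f_ : ℕ → Eucl n → ℝ} {f : Eucl n → ℝ}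
    (hc_ : ∀ i, ConvexOn ℝ univ (f_ i)) (hc : ConvexOn ℝ univ f)
    (hptw : ∀ z, Tendsto (fun i => f_ i z) atTop (𝓝 (f z)))
    {x : Eucl n} (hd_ : ∀ i, DifferentiableAt ℝ (f_ i) x)
    (hd : DifferentiableAt ℝ f x) :
    Tendsto (fun i => gradient (f_ i) x) atTop (𝓝 (gradient f x)) := by
  have hgk : ∀ (g : Eucl n → ℝ) (k : Fin n),
      gradient g x k = fderiv ℝ g x (EuclideanSpace.single k (1:ℝ)) := by
    intro g k
    rw [fderiv_eq_inner_gradient, EuclideanSpace.inner_single_right]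
    simp
  have hcoord : ∀ k : Fin n,
      Tendsto (fun i => gradient (f_ i) x k - gradient f x k) atTop (𝓝 0) := by
    intro k
    have h1 : Tendsto (fun i => gradient (f_ i) x k) atTop (𝓝 (gradient f x k)) := by
      simp only [hgk]
      exact fderiv_apply_tendsto hc_ hc hptw hd_ hd _
    simpa using h1.sub (tendsto_const_nhds (x := gradient f x k))
  rw [tendsto_iff_norm_sub_tendsto_zero]
  have hnorm : ∀ i, ‖gradient (f_ i) x - gradient f x‖
      = Real.sqrt (∑ k, (gradient (f_ i) x k - gradient f x k)^2) := by
    intro i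
    rw [EuclideanSpace.norm_eq]
    congr 1
    apply Finset.sum_congr rfl
    intro k _
    rw [Real.norm_eq_abs, sq_abs]
    rfl
  simp only [hnorm]
  have hsum : Tendsto (fun i => ∑ k : Fin n, (gradient (f_ i) x k - gradient f x k)^2)
      atTop (𝓝 0) := by
    have h2 := tendsto_finset_sum (Finset.univ : Finset (Fin n))
      (fun k _ => (hcoord k).pow 2)
    simpa using h2
  have h3 := (Real.continuous_sqrt.tendsto 0).comp hsum
  simpa [Real.sqrt_zero, Function.comp_def] using h3

/-! ### Measure-theoretic machinery -/

lemma pi_null_iff {k : ℕ} (s : Set (Fin k → ℝ)) :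
    (volume : Measure (Fin k → ℝ)) s = 0 ↔ μH[(k : ℝ)] s = 0 := by
  have hcast : ((Fintype.card (Fin k) : ℝ)) = (k : ℝ) := by simp
  rw [← hausdorffMeasure_pi_real (ι := Fin k), hcast]

lemma eucl_hausdorff_null {k : ℕ} {s : Set (Eucl k)} (h : volume s = 0) :
    μH[(k : ℝ)] s = 0 := by
  have hmp := EuclideanSpace.volume_preserving_symm_measurableEquiv_toLp (Fin k)
  have h1 : (volume : Measure (Fin k → ℝ))
      (⇑(MeasurableEquiv.toLp 2 (Fin k → ℝ)).symm '' s) = 0 := by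
    rw [← hmp.map_eq, MeasurableEquiv.map_apply,
      Set.preimage_image_eq _ (MeasurableEquiv.toLp 2 (Fin k → ℝ)).symm.injective]
    exact h
  have h2 : μH[(k : ℝ)] (WithLp.ofLp '' s) = 0 := (pi_null_iff _).1 h1
  have h3 := (PiLp.antilipschitzWith_ofLp 2 (fun _ : Fin k => ℝ)).le_hausdorffMeasure_image
    (by positivity : (0:ℝ) ≤ (k:ℝ)) s
  rw [h2, mul_zero] at h3
  exact le_antisymm h3 zero_le

lemma dist_coord_le {k : ℕ} (x y : Eucl k) (i : Fin k) : dist (x i) (y i) ≤ dist x y := by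
  rw [EuclideanSpace.dist_eq]
  have h1 : dist (x i) (y i) = Real.sqrt (dist (x i) (y i) ^ 2) :=
    (Real.sqrt_sq dist_nonneg).symm
  rw [h1]
  apply Real.sqrt_le_sqrt
  exact Finset.single_le_sum (f := fun j => dist (x j) (y j)^2) (fun j _ => sq_nonneg _) (Finset.mem_univ i)

lemma sqrt_dist_le {a u v : ℝ} (ha : 0 < a) (hu : a ≤ u) (hv : a ≤ v) :
    |Real.sqrt u - Real.sqrt v| ≤ |u - v| / (2 * Real.sqrt a) := by
  have h2a : (0:ℝ) < 2 * Real.sqrt a := by positivity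
  rw [le_div_iff₀ h2a]
  have hsu := Real.sqrt_le_sqrt hu
  have hsv := Real.sqrt_le_sqrt hv
  have hsum : 2 * Real.sqrt a ≤ Real.sqrt u + Real.sqrt v := by linarith
  have h1 : Real.sqrt u * Real.sqrt u = u := Real.mul_self_sqrt (by linarith)
  have h2 : Real.sqrt v * Real.sqrt v = v := Real.mul_self_sqrt (by linarith)
  have hid : (Real.sqrt u - Real.sqrt v) * (Real.sqrt u + Real.sqrt v) = u - v := by
    linear_combination h1 - h2
  have habs : |u - v| = |Real.sqrt u - Real.sqrt v| * (Real.sqrt u + Real.sqrt v) := by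
    rw [← hid, abs_mul, abs_of_nonneg (by linarith : (0:ℝ) ≤ Real.sqrt u + Real.sqrt v)]
  rw [habs]
  exact mul_le_mul_of_nonneg_left hsum (abs_nonneg _)

lemma sum_sq_of_norm_one {k : ℕ} {x : Eucl k} (hx : ‖x‖ = 1) :
    ∑ i, (x i)^2 = 1 := by
  have h1 := EuclideanSpace.norm_eq x
  rw [hx] at h1
  have h3 : (0:ℝ) ≤ ∑ i, ‖x i‖^2 := by positivity
  have h2 : ∑ i, ‖x i‖^2 = 1 := by nlinarith [Real.sq_sqrt h3, h1.symm]
  calc ∑ i, (x i)^2 = ∑ i, ‖x i‖^2 := by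
        apply Finset.sum_congr rfl; intro j _; rw [Real.norm_eq_abs, sq_abs]
    _ = 1 := h2

lemma cap_null {m : ℕ} (j : Fin (m + 1)) {s : Set (Eucl (m + 1))}
    (hvol : volume s = 0)
    (hcone : ∀ x ∈ s, ‖x‖ = 1 → ∀ t : ℝ, 1 < t → t < 2 → t • x ∈ s) :
    μH[((m + 1 : ℕ) : ℝ) - 1]
      {x : Eucl (m + 1) | ‖x‖ = 1 ∧ x ∈ s ∧ 1 / (m + 1 : ℝ) ≤ x j ^ 2 ∧ 0 ≤ x j} = 0 := by
  set A := {x : Eucl (m+1) | ‖x‖ = 1 ∧ x ∈ s ∧ 1 / (m+1:ℝ) ≤ x j ^ 2 ∧ 0 ≤ x j} with hA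
  set π : Eucl (m+1) → (Fin m → ℝ) := fun x i => x (j.succAbove i) with hπ
  have hsq : ∀ x : Eucl (m+1), ‖x‖ = 1 → (∑ i, (x (j.succAbove i))^2) = 1 - x j ^ 2 := by
    intro x hx
    have h1 := sum_sq_of_norm_one hx
    rw [Fin.sum_univ_succAbove (fun i => (x i)^2) j] at h1
    linarith
  set Y : Set (Fin m → ℝ) := π '' A with hY
  -- Step A : Y is Lebesgue-null
  have hYnull : (volume : Measure (Fin m → ℝ)) Y = 0 := by
    set T := {z : Eucl (m+1) | ∃ x ∈ A, ∃ t : ℝ, 1 < t ∧ t < 2 ∧ z = t • x} with hT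
    have hTs : T ⊆ s := by
      rintro z ⟨x, hx, t, h1, h2, rfl⟩
      exact hcone x hx.2.1 hx.1 t h1 h2
    have hTnull : μH[((m+1:ℕ) : ℝ)] T = 0 :=
      eucl_hausdorff_null (measure_mono_null hTs hvol)
    set Φ : Eucl (m+1) → (Fin (m+1) → ℝ) := fun x => j.insertNth ‖x‖ (π x) with hΦ
    have hΦlip : LipschitzWith 1 Φ := by
      apply LipschitzWith.of_dist_le_mul
      intro x y
      rw [NNReal.coe_one, one_mul, dist_pi_le_iff dist_nonneg]
      intro i
      refine Fin.succAboveCases j ?_ ?_ i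
      · simp only [hΦ, Fin.insertNth_apply_same]
        rw [Real.dist_eq, dist_eq_norm]
        exact abs_norm_sub_norm_le x y
      · intro k
        simp only [hΦ, Fin.insertNth_apply_succAbove]
        exact dist_coord_le x y _
    have hΦT : μH[((m+1:ℕ):ℝ)] (Φ '' T) = 0 := by
      have h4 := hΦlip.hausdorffMeasure_image_le
        (by positivity : (0:ℝ) ≤ ((m+1:ℕ):ℝ)) T
      rw [hTnull, mul_zero] at h4
      exact le_antisymm h4 zero_le
    have hvolΦT : (volume : Measure (Fin (m+1) → ℝ)) (Φ '' T) = 0 := (pi_null_iff _).2 hΦT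
    have hq := measurePreserving_piFinSuccAbove (fun _ : Fin (m+1) => (volume : Measure ℝ)) j
    set q := MeasurableEquiv.piFinSuccAbove (fun _ : Fin (m+1) => ℝ) j with hqdef
    have hprod : ((volume : Measure ℝ).prod (Measure.pi fun _ : Fin m => (volume : Measure ℝ)))
        (⇑q '' (Φ '' T)) = 0 := by
      rw [← hq.map_eq, MeasurableEquiv.map_apply, Set.preimage_image_eq _ q.injective]
      rw [← volume_pi]
      exact hvolΦT
    have hslice := Measure.measure_ae_null_of_prod_null hprod
    have hxt : ∃ t : ℝ, (1 < t ∧ t < 2) ∧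
        (Measure.pi fun _ : Fin m => (volume : Measure ℝ))
          (Prod.mk t ⁻¹' (⇑q '' (Φ '' T))) = 0 := by
      by_contra hcon
      push_neg at hcon
      have hsub2 : Ioo (1:ℝ) 2 ⊆ {t : ℝ | ¬ (Measure.pi fun _ : Fin m => (volume:Measure ℝ))
          (Prod.mk t ⁻¹' (⇑q '' (Φ '' T))) = 0} := by
        intro t ht
        exact hcon t ⟨ht.1, ht.2⟩
      have h0 : (volume : Measure ℝ) (Ioo (1:ℝ) 2) = 0 := by
        refine measure_mono_null hsub2 ?_
        rw [Filter.EventuallyEq, ae_iff] at hslice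
        simpa using hslice
      rw [Real.volume_Ioo] at h0
      norm_num at h0
    obtain ⟨t, ⟨ht1, ht2⟩, htnull⟩ := hxt
    have ht0 : (0:ℝ) < t := by linarith
    have hsub3 : t • Y ⊆ Prod.mk t ⁻¹' (⇑q '' (Φ '' T)) := by
      rintro _ ⟨y, ⟨x, hxA, rfl⟩, rfl⟩
      refine ⟨Φ (t • x), ⟨t • x, ⟨x, hxA, t, ht1, ht2, rfl⟩, rfl⟩, ?_⟩
      have hnorm : ‖t • x‖ = t := by
        rw [norm_smul, hxA.1, Real.norm_eq_abs, abs_of_pos ht0, mul_one]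
      have hπs : π (t • x) = t • π x := by
        funext i
        simp [hπ, PiLp.smul_apply, smul_eq_mul]
      show ⇑q (Φ (t • x)) = (t, t • π x)
      have hqapp : ⇑q (Φ (t • x)) = (Φ (t • x) j, fun i => Φ (t • x) (j.succAbove i)) := rfl
      rw [hqapp]
      refine Prod.ext ?_ ?_
      · simp only [hΦ, Fin.insertNth_apply_same]
        exact hnorm
      · funext i
        simp only [hΦ, Fin.insertNth_apply_succAbove]
        rw [hπs]
    have htY : (volume : Measure (Fin m → ℝ)) (t • Y) = 0 := by
      rw [volume_pi]
      exact measure_mono_null hsub3 htnull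
    have h5 : ENNReal.ofReal (|t ^ Module.finrank ℝ (Fin m → ℝ)|) * volume Y = 0 := by
      rw [← Measure.addHaar_smul volume t Y]
      exact htY
    have h6 : ENNReal.ofReal (|t ^ Module.finrank ℝ (Fin m → ℝ)|) ≠ 0 := by
      rw [ne_eq, ENNReal.ofReal_eq_zero, not_le]
      positivity
    exact (mul_eq_zero.1 h5).resolve_left h6
  -- Step B : A is in the Lipschitz image of Y ∩ D
  set c1 : ℝ := 1 - 1 / (m+1:ℝ) with hc1
  set D : Set (Fin m → ℝ) := {y | ∑ i, (y i)^2 ≤ c1} with hD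
  set G : (Fin m → ℝ) → Eucl (m+1) := fun y =>
    (WithLp.equiv 2 (Fin (m+1) → ℝ)).symm
      (j.insertNth (Real.sqrt (1 - ∑ i, (y i)^2)) y) with hG
  have hmpos : (0:ℝ) < 1 / (m+1:ℝ) := by positivity
  have hGA : A ⊆ G '' (Y ∩ D) := by
    intro x hx
    obtain ⟨hx1, hx2, hx3, hx4⟩ := hx
    have hsum := hsq x hx1
    have hπD : (∑ i, (π x i)^2) ≤ c1 := by
      simp only [hπ]
      rw [hsum, hc1]
      linarith
    refine ⟨π x, ⟨⟨x, ⟨hx1, hx2, hx3, hx4⟩, rfl⟩, hπD⟩, ?_⟩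
    have h7 : (1 - ∑ i, (π x i)^2) = x j ^ 2 := by
      simp only [hπ]
      rw [hsum]
      ring
    have h9 : j.insertNth (Real.sqrt (1 - ∑ i, (π x i)^2)) (π x)
        = ⇑(WithLp.equiv 2 (Fin (m+1) → ℝ)) x := by
      rw [h7, Real.sqrt_sq hx4, Fin.insertNth_eq_iff]
      exact ⟨rfl, rfl⟩
    simp only [hG, h9, Equiv.symm_apply_apply]
  have hKnat : (0:ℝ) ≤ (m:ℝ) * ((m:ℝ)+1) := by positivity
  set Lr : ℝ := 1 + (m:ℝ) * ((m:ℝ)+1) with hLr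
  have hLr1 : (1:ℝ) ≤ Lr := by rw [hLr]; linarith
  set Kc : ℝ≥0 := (((m+1) * (1 + m * (m+1)) : ℕ) : ℝ≥0) with hKc
  have hKcval : (Kc : ℝ) = ((m:ℝ)+1) * Lr := by
    rw [hKc, hLr]
    push_cast
    ring
  have hGlip : LipschitzOnWith Kc G D := by
    rw [lipschitzOnWith_iff_dist_le_mul]
    intro y hy y' hy'
    set r := dist y y' with hr
    have hr0 : (0:ℝ) ≤ r := dist_nonneg
    have hcoordb : ∀ i : Fin m, |y i - y' i| ≤ r := by
      intro i
      have := dist_le_pi_dist y y' i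
      rwa [Real.dist_eq] at this
    have habs1 : ∀ i : Fin m, |y i| ≤ 1 := by
      intro i
      have h1 : (y i)^2 ≤ c1 := le_trans
        (Finset.single_le_sum (fun k _ => sq_nonneg (y k)) (Finset.mem_univ i)) hy
      have h2 : (y i)^2 ≤ 1 := by rw [hc1] at h1; linarith
      nlinarith [abs_nonneg (y i), sq_abs (y i)]
    have habs1' : ∀ i : Fin m, |y' i| ≤ 1 := by
      intro i
      have h1 : (y' i)^2 ≤ c1 := le_trans
        (Finset.single_le_sum (fun k _ => sq_nonneg (y' k)) (Finset.mem_univ i)) hy'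
      have h2 : (y' i)^2 ≤ 1 := by rw [hc1] at h1; linarith
      nlinarith [abs_nonneg (y' i), sq_abs (y' i)]
    have hS : |(∑ i, (y i)^2) - ∑ i, (y' i)^2| ≤ 2 * m * r := by
      rw [← Finset.sum_sub_distrib]
      calc |∑ i, ((y i)^2 - (y' i)^2)| ≤ ∑ i, |(y i)^2 - (y' i)^2| :=
            Finset.abs_sum_le_sum_abs _ _
        _ ≤ ∑ _i : Fin m, 2 * r := by
            apply Finset.sum_le_sum
            intro i _
            have h1 : (y i)^2 - (y' i)^2 = (y i - y' i) * (y i + y' i) := by ring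
            rw [h1, abs_mul]
            have h2 : |y i + y' i| ≤ 2 := by
              calc |y i + y' i| ≤ |y i| + |y' i| := abs_add_le _ _
                _ ≤ 2 := by linarith [habs1 i, habs1' i]
            calc |y i - y' i| * |y i + y' i| ≤ r * 2 :=
                  mul_le_mul (hcoordb i) h2 (abs_nonneg _) hr0
              _ = 2 * r := by ring
        _ = 2 * m * r := by
            rw [Finset.sum_const, Finset.card_univ, Fintype.card_fin]
            push_cast
            ring
    have hsqrtb : |Real.sqrt (1 - ∑ i, (y i)^2) - Real.sqrt (1 - ∑ i, (y' i)^2)|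
        ≤ ((m:ℝ) * ((m:ℝ)+1)) * r := by
      have hu : 1 / (m+1:ℝ) ≤ 1 - ∑ i, (y i)^2 := by
        have := hy
        rw [hD, mem_setOf_eq, hc1] at this
        linarith
      have hv : 1 / (m+1:ℝ) ≤ 1 - ∑ i, (y' i)^2 := by
        have := hy'
        rw [hD, mem_setOf_eq, hc1] at this
        linarith
      have h1 := sqrt_dist_le hmpos hu hv
      have h2 : |(1 - ∑ i, (y i)^2) - (1 - ∑ i, (y' i)^2)| ≤ 2 * m * r := by
        have h3 : (1 - ∑ i, (y i)^2) - (1 - ∑ i, (y' i)^2)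
            = -((∑ i, (y i)^2) - ∑ i, (y' i)^2) := by ring
        rw [h3, abs_neg]
        exact hS
      have hsqa : Real.sqrt (1 / (m+1:ℝ)) = 1 / Real.sqrt (m+1:ℝ) := by
        rw [one_div, one_div, Real.sqrt_inv]
      have hsqpos : (0:ℝ) < Real.sqrt (m+1:ℝ) := Real.sqrt_pos.2 (by positivity)
      have hsple : Real.sqrt (m+1:ℝ) ≤ (m:ℝ)+1 := by
        have h4 : ((m:ℝ)+1) = Real.sqrt (((m:ℝ)+1)^2) := (Real.sqrt_sq (by positivity)).symm
        rw [h4]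
        apply Real.sqrt_le_sqrt
        nlinarith [Nat.cast_nonneg (α := ℝ) m]
      calc |Real.sqrt (1 - ∑ i, (y i)^2) - Real.sqrt (1 - ∑ i, (y' i)^2)|
          ≤ |(1 - ∑ i, (y i)^2) - (1 - ∑ i, (y' i)^2)| / (2 * Real.sqrt (1/(m+1:ℝ))) := h1
        _ ≤ (2 * m * r) / (2 * Real.sqrt (1/(m+1:ℝ))) := by
            gcongr
        _ = (m:ℝ) * r * Real.sqrt (m+1:ℝ) := by
            rw [hsqa]
            field_simp
        _ = ((m:ℝ) * r) * Real.sqrt ((m:ℝ)+1) := by ring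
        _ ≤ ((m:ℝ) * r) * ((m:ℝ)+1) :=
            mul_le_mul_of_nonneg_left hsple (mul_nonneg (Nat.cast_nonneg m) hr0)
        _ = ((m:ℝ) * ((m:ℝ)+1)) * r := by ring
    have hGi : ∀ i : Fin (m+1), dist (G y i) (G y' i) ≤ Lr * r := by
      intro i
      refine Fin.succAboveCases j ?_ ?_ i
      · have e1 : G y j = Real.sqrt (1 - ∑ i, (y i)^2) := by
          simp only [hG, WithLp.equiv_symm_apply, PiLp.toLp_apply, Fin.insertNth_apply_same]
        have e2 : G y' j = Real.sqrt (1 - ∑ i, (y' i)^2) := by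
          simp only [hG, WithLp.equiv_symm_apply, PiLp.toLp_apply, Fin.insertNth_apply_same]
        rw [Real.dist_eq, e1, e2]
        calc |Real.sqrt (1 - ∑ i, (y i)^2) - Real.sqrt (1 - ∑ i, (y' i)^2)|
            ≤ ((m:ℝ) * ((m:ℝ)+1)) * r := hsqrtb
          _ ≤ Lr * r := by rw [hLr]; nlinarith [hr0]
      · intro k
        have e1 : G y (j.succAbove k) = y k := by
          simp only [hG, WithLp.equiv_symm_apply, PiLp.toLp_apply, Fin.insertNth_apply_succAbove]
        have e2 : G y' (j.succAbove k) = y' k := by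
          simp only [hG, WithLp.equiv_symm_apply, PiLp.toLp_apply, Fin.insertNth_apply_succAbove]
        rw [Real.dist_eq, e1, e2]
        calc |y k - y' k| ≤ r := hcoordb k
          _ ≤ Lr * r := by nlinarith [hr0, hLr1]
    rw [EuclideanSpace.dist_eq, hKcval]
    have hsum2 : (∑ i : Fin (m+1), dist (G y i) (G y' i)^2)
        ≤ ∑ _i : Fin (m+1), (Lr * r)^2 := by
      apply Finset.sum_le_sum
      intro i _
      exact pow_le_pow_left₀ dist_nonneg (hGi i) 2
    calc Real.sqrt (∑ i : Fin (m+1), dist (G y i) (G y' i)^2)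
        ≤ Real.sqrt (∑ _i : Fin (m+1), (Lr * r)^2) := Real.sqrt_le_sqrt hsum2
      _ = Real.sqrt (((m:ℝ)+1) * (Lr * r)^2) := by
          rw [Finset.sum_const, Finset.card_univ, Fintype.card_fin, nsmul_eq_mul]
          push_cast
          ring_nf
      _ ≤ Real.sqrt ((((m:ℝ)+1) * (Lr * r))^2) := by
          apply Real.sqrt_le_sqrt
          nlinarith [hr0, hLr1, Nat.cast_nonneg (α := ℝ) m, sq_nonneg (Lr * r)]
      _ = ((m:ℝ)+1) * (Lr * r) := Real.sqrt_sq (by positivity)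
      _ = ((m:ℝ)+1) * Lr * r := by ring
  -- conclude
  have hd0 : (0:ℝ) ≤ ((m+1:ℕ):ℝ) - 1 := by push_cast; linarith
  have h10 : μH[((m+1:ℕ):ℝ) - 1] A
      ≤ (Kc : ℝ≥0∞) ^ (((m+1:ℕ):ℝ) - 1) * μH[((m+1:ℕ):ℝ) - 1] (Y ∩ D) := by
    calc μH[((m+1:ℕ):ℝ) - 1] A ≤ μH[((m+1:ℕ):ℝ) - 1] (G '' (Y ∩ D)) :=
          measure_mono hGA
      _ ≤ (Kc : ℝ≥0∞) ^ (((m+1:ℕ):ℝ) - 1) * μH[((m+1:ℕ):ℝ) - 1] (Y ∩ D) :=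
          (hGlip.mono inter_subset_right).hausdorffMeasure_image_le hd0
  have h11 : μH[((m+1:ℕ):ℝ) - 1] (Y ∩ D) = 0 := by
    have hcast2 : ((m+1:ℕ):ℝ) - 1 = ((m:ℕ):ℝ) := by push_cast; ring
    rw [hcast2]
    exact (pi_null_iff _).1 (measure_mono_null inter_subset_left hYnull)
  rw [h11, mul_zero] at h10
  exact le_antisymm h10 zero_le

lemma sphere_null {m : ℕ} {s : Set (Eucl (m+1))} (hvol : volume s = 0)
    (hcone : ∀ x ∈ s, ‖x‖ = 1 → ∀ t : ℝ, 1 < t → t < 2 → t • x ∈ s) :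
    sphMeasure (m+1) {x : Sph (m+1) | (x : Eucl (m+1)) ∈ s} = 0 := by
  have hd0 : (0:ℝ) ≤ ((m+1:ℕ):ℝ) - 1 := by push_cast; linarith
  have hiso : Isometry ((↑) : Sph (m+1) → Eucl (m+1)) := isometry_subtype_coe
  have hrw : sphMeasure (m+1) {x : Sph (m+1) | (x : Eucl (m+1)) ∈ s}
      = μH[((m+1:ℕ):ℝ) - 1] (((↑) : Sph (m+1) → Eucl (m+1)) '' {x : Sph (m+1) | (x : Eucl (m+1)) ∈ s}) := by
    rw [hiso.hausdorffMeasure_image (Or.inl hd0)]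
    rfl
  rw [hrw]
  have himg : (((↑) : Sph (m+1) → Eucl (m+1)) '' {x : Sph (m+1) | (x : Eucl (m+1)) ∈ s})
      ⊆ ⋃ j : Fin (m+1),
        ({x : Eucl (m+1) | ‖x‖ = 1 ∧ x ∈ s ∧ 1/(m+1:ℝ) ≤ x j ^ 2 ∧ 0 ≤ x j}
          ∪ {x : Eucl (m+1) | ‖x‖ = 1 ∧ x ∈ s ∧ 1/(m+1:ℝ) ≤ x j ^ 2 ∧ x j ≤ 0}) := by
    rintro _ ⟨x, hx, rfl⟩
    have hx1 : ‖(x : Eucl (m+1))‖ = 1 := mem_sphere_zero_iff_norm.mp x.2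
    have hsum : ∑ i, ((x : Eucl (m+1)) i)^2 = 1 := sum_sq_of_norm_one hx1
    have hex : ∃ i, 1/(m+1:ℝ) ≤ ((x : Eucl (m+1)) i)^2 := by
      by_contra hcon
      push_neg at hcon
      have hlt : ∑ i, ((x : Eucl (m+1)) i)^2 < ∑ _i : Fin (m+1), 1/(m+1:ℝ) :=
        Finset.sum_lt_sum_of_nonempty Finset.univ_nonempty fun i _ => hcon i
      rw [hsum, Finset.sum_const, Finset.card_univ, Fintype.card_fin, nsmul_eq_mul] at hlt
      have : ((m:ℝ)+1) * (1/(m+1:ℝ)) = 1 := by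
        field_simp
      push_cast at hlt
      rw [this] at hlt
      exact lt_irrefl _ hlt
    obtain ⟨jj, hjj⟩ := hex
    refine mem_iUnion.2 ⟨jj, ?_⟩
    rcases le_total 0 ((x : Eucl (m+1)) jj) with hsgn | hsgn
    · exact Or.inl ⟨hx1, hx, hjj, hsgn⟩
    · exact Or.inr ⟨hx1, hx, hjj, hsgn⟩
  refine measure_mono_null himg (measure_iUnion_null fun j => measure_union_null ?_ ?_)
  · exact cap_null j hvol hcone
  · set s' := (fun x : Eucl (m+1) => -x) ⁻¹' s with hs'
    have hseq : s' = (-1 : ℝ) • s := by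
      ext z
      constructor
      · intro hz
        exact ⟨-z, hz, by simp⟩
      · rintro ⟨w, hw, rfl⟩
        show -((-1:ℝ) • w) ∈ s
        simpa using hw
    have hvol' : volume s' = 0 := by
      rw [hseq, Measure.addHaar_smul, hvol, mul_zero]
    have hcone' : ∀ x ∈ s', ‖x‖ = 1 → ∀ t : ℝ, 1 < t → t < 2 → t • x ∈ s' := by
      intro x hx hxn t h1 h2
      simp only [hs', mem_preimage] at hx ⊢
      rw [← smul_neg]
      exact hcone (-x) hx (by rwa [norm_neg]) t h1 h2
    have hneg := cap_null j hvol' hcone'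
    have hmap : {x : Eucl (m+1) | ‖x‖ = 1 ∧ x ∈ s ∧ 1/(m+1:ℝ) ≤ x j ^2 ∧ x j ≤ 0}
        = (fun x : Eucl (m+1) => -x) ''
          {x : Eucl (m+1) | ‖x‖ = 1 ∧ x ∈ s' ∧ 1/(m+1:ℝ) ≤ x j ^2 ∧ 0 ≤ x j} := by
      ext z
      constructor
      · rintro ⟨h1, h2, h3, h4⟩
        refine ⟨-z, ⟨by rwa [norm_neg], by simpa [hs'] using h2, ?_, ?_⟩, by simp⟩
        · have : ((-z) j) = -(z j) := rfl
          rw [this, neg_sq]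
          exact h3
        · have : ((-z) j) = -(z j) := rfl
          rw [this]
          linarith
      · rintro ⟨w, ⟨h1, h2, h3, h4⟩, rfl⟩
        have hwj : ((fun x : Eucl (m+1) => -x) w) j = -(w j) := rfl
        refine ⟨by rw [show (fun x : Eucl (m+1) => -x) w = -w from rfl]; rwa [norm_neg], ?_, ?_, ?_⟩
        · simpa [hs', mem_preimage] using h2
        · rw [hwj, neg_sq]; exact h3
        · rw [hwj]; linarith
    rw [hmap]
    have hnegiso : Isometry (fun x : Eucl (m+1) => -x) :=
      Isometry.of_dist_eq fun a b => by
        rw [dist_eq_norm, dist_eq_norm,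
          show (fun x : Eucl (m+1) => -x) a - (fun x : Eucl (m+1) => -x) b = -a - -b from rfl,
          neg_sub_neg, norm_sub_rev]
    rw [hnegiso.hausdorffMeasure_image (Or.inl hd0)]
    exact hneg

/-! ### Rademacher, cones, bounds -/

lemma nondiff_null {n : ℕ} {K : Set (Eucl n)} (hK : IsConvexBody K) :
    volume {x : Eucl n | ¬ DifferentiableAt ℝ (suppFn K) x} = 0 := by
  obtain ⟨r, hr⟩ := (isBounded_iff_subset_closedBall 0).1 hK.2.1.isBounded
  have hR : ∀ y ∈ K, ‖y‖ ≤ (r.toNNReal : ℝ) := by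
    intro y hy
    have := hr hy
    rw [mem_closedBall_zero_iff] at this
    exact this.trans (Real.le_coe_toNNReal r)
  have hlip := suppFn_lipschitz hK hR
  have h1 := hlip.ae_differentiableAt (μ := volume)
  rw [ae_iff] at h1
  exact h1

lemma nondiff_cone {n : ℕ} {K : Set (Eucl n)} (hK : IsConvexBody K) :
    ∀ x ∈ {x : Eucl n | ¬ DifferentiableAt ℝ (suppFn K) x}, ‖x‖ = 1 →
      ∀ t : ℝ, 1 < t → t < 2 → t • x ∈ {x : Eucl n | ¬ DifferentiableAt ℝ (suppFn K) x} := by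
  intro x hx _ t h1 _
  simp only [mem_setOf_eq] at hx ⊢
  intro hdiff
  apply hx
  have ht0 : (0:ℝ) < t := by linarith
  have heq : (fun y : Eucl n => t⁻¹ * suppFn K (t • y)) = suppFn K := by
    funext y
    rw [suppFn_smul hK y ht0.le]
    field_simp
  rw [← heq]
  have h3 : DifferentiableAt ℝ (fun y : Eucl n => suppFn K (t • y)) x := by
    have hsm : DifferentiableAt ℝ (fun y : Eucl n => t • y) x :=
      (differentiable_id.const_smul t).differentiableAt
    have h3' : DifferentiableAt ℝ (suppFn K ∘ fun y : Eucl n => t • y) x :=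
      DifferentiableAt.comp x hdiff hsm
    exact h3'
  exact h3.const_mul _

lemma sphGrad_bound {n : ℕ} {K : Set (Eucl n)} (hK : IsConvexBody K) {R : ℝ≥0}
    (hR : ∀ y ∈ K, ‖y‖ ≤ (R : ℝ)) {u : Sph n → ℝ} (hu : ∀ x : Sph n, u x = suppFn K (x : Eucl n))
    (x : Sph n) : ‖sphGrad u x‖ ≤ 2 * R := by
  have hhe : homExt u = suppFn K := homExt_eq_suppFn hK hu
  have hxn : ‖(x : Eucl n)‖ = 1 := mem_sphere_zero_iff_norm.mp x.2
  rw [sphGrad, hhe]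
  have h1 : ‖gradient (suppFn K) (x : Eucl n)‖ ≤ (R : ℝ) := by
    by_cases hd : DifferentiableAt ℝ (suppFn K) (x : Eucl n)
    · have hrfl : gradient (suppFn K) (x : Eucl n)
          = (InnerProductSpace.toDual ℝ (Eucl n)).symm (fderiv ℝ (suppFn K) (x : Eucl n)) := rfl
      rw [hrfl, LinearIsometryEquiv.norm_map]
      exact hd.hasFDerivAt.le_of_lipschitz (suppFn_lipschitz hK hR)
    · rw [gradient_eq_zero_of_not_differentiableAt hd, norm_zero]
      positivity
  have h2 : ‖u x • (x : Eucl n)‖ ≤ (R : ℝ) := by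
    rw [norm_smul, hxn, mul_one, hu, Real.norm_eq_abs]
    have := abs_suppFn_le hK hR (x : Eucl n)
    rwa [hxn, mul_one] at this
  calc ‖gradient (suppFn K) (x : Eucl n) - u x • (x : Eucl n)‖
      ≤ ‖gradient (suppFn K) (x : Eucl n)‖ + ‖u x • (x : Eucl n)‖ := norm_sub_le _ _
    _ ≤ (R : ℝ) + R := add_le_add h1 h2
    _ = 2 * R := by ring

lemma homExt_apply_ne {n : ℕ} (u : Sph n → ℝ) {x : Eucl n} (hx : x ≠ 0) :
    homExt u x = ‖x‖ * u ⟨‖x‖⁻¹ • x, by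
      rw [mem_sphere_zero_iff_norm, norm_smul, norm_inv, norm_norm,
        inv_mul_cancel₀ (norm_ne_zero_iff.mpr hx)]⟩ := by
  rw [homExt, dif_neg hx]

lemma homExt_zero_pt {n : ℕ} (u : Sph n → ℝ) : homExt u 0 = 0 := by
  rw [homExt, dif_pos rfl]

end TauProofAux


set_option maxHeartbeats 1000000

/-- A functional on `𝓗(S^{n-1})` (restrictions of support functions) is
sequentially continuous with respect to τ-convergence if and only if it is
sequentially continuous with respect to uniform convergence. -/
theorem tau_continuity_iff_uniform_continuity_on_H (n : ℕ) (hn : 2 ≤ n)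
    (μ : (Sph n → ℝ) → ℝ) :
    (∀ (h_ : ℕ → Sph n → ℝ) (h : Sph n → ℝ), (∀ i, IsSuppRestriction (h_ i)) →
      IsSuppRestriction h → TauTendsto h_ h →
      Tendsto (fun i => μ (h_ i)) atTop (𝓝 (μ h))) ↔
    (∀ (h_ : ℕ → Sph n → ℝ) (h : Sph n → ℝ), (∀ i, IsSuppRestriction (h_ i)) →
      IsSuppRestriction h → TendstoUniformly h_ h atTop →
      Tendsto (fun i => μ (h_ i)) atTop (𝓝 (μ h))) := by
  constructor
  · intro hτ h_ h hh_ hh hunif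
    obtain ⟨m, rfl⟩ : ∃ m, n = m + 1 := ⟨n - 1, by omega⟩
    have hsr_ : ∀ i, IsSuppRestriction (h_ i) := hh_
    have hsr : IsSuppRestriction h := hh
    choose K_ hK_ hhK_ using hh_
    obtain ⟨K, hK, hhK⟩ := hh
    open TauProofAux in
    have hrad : ∀ i, ∃ R : ℝ≥0, ∀ y ∈ K_ i, ‖y‖ ≤ (R:ℝ) := by
      intro i
      obtain ⟨r, hr⟩ := (isBounded_iff_subset_closedBall 0).1 (hK_ i).2.1.isBounded
      exact ⟨r.toNNReal, fun y hy =>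
        (mem_closedBall_zero_iff.1 (hr hy)).trans (Real.le_coe_toNNReal r)⟩
    choose R_ hR_ using hrad
    obtain ⟨R0n, hR0⟩ : ∃ R : ℝ≥0, ∀ y ∈ K, ‖y‖ ≤ (R:ℝ) := by
      obtain ⟨r, hr⟩ := (isBounded_iff_subset_closedBall 0).1 hK.2.1.isBounded
      exact ⟨r.toNNReal, fun y hy =>
        (mem_closedBall_zero_iff.1 (hr hy)).trans (Real.le_coe_toNNReal r)⟩
    obtain ⟨N, hN⟩ := eventually_atTop.1 (Metric.tendstoUniformly_iff.1 hunif 1 one_pos)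
    have hQex : ∀ i, N ≤ i → ∀ y ∈ K_ i, ‖y‖ ≤ (R0n : ℝ) + 1 := by
      intro i hi y hy
      rcases eq_or_ne y 0 with rfl | hy0
      · simp only [norm_zero]
        positivity
      · have hyn : (0:ℝ) < ‖y‖ := norm_pos_iff.mpr hy0
        set xs : Sph (m+1) := ⟨‖y‖⁻¹ • y, by
          rw [mem_sphere_zero_iff_norm, norm_smul, norm_inv, norm_norm,
            inv_mul_cancel₀ hyn.ne']⟩ with hxs
        have hxnorm : ‖(xs : Eucl (m+1))‖ = 1 := mem_sphere_zero_iff_norm.mp xs.2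
        have h1 : ⟪(xs : Eucl (m+1)), y⟫_ℝ = ‖y‖ := by
          show ⟪‖y‖⁻¹ • y, y⟫_ℝ = ‖y‖
          rw [real_inner_smul_left, real_inner_self_eq_norm_mul_norm]
          field_simp
        have h2 : ⟪(xs : Eucl (m+1)), y⟫_ℝ ≤ suppFn (K_ i) (xs : Eucl (m+1)) :=
          TauProofAux.suppFn_le (hK_ i) hy
        have h3 : suppFn (K_ i) (xs : Eucl (m+1)) = h_ i xs := (hhK_ i xs).symm
        have h4 : dist (h xs) (h_ i xs) < 1 := hN i hi xs
        have h5 : h xs ≤ (R0n : ℝ) := by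
          rw [hhK xs]
          have h6 := TauProofAux.abs_suppFn_le hK hR0 (xs : Eucl (m+1))
          rw [hxnorm, mul_one] at h6
          exact (le_abs_self _).trans h6
        rw [Real.dist_eq] at h4
        have h7 := abs_lt.1 h4
        linarith
    set Q : ℝ≥0 := ((Finset.range (N+1)).sup R_) ⊔ (R0n + 1) with hQdef
    have hQ : ∀ i, ∀ y ∈ K_ i, ‖y‖ ≤ (Q : ℝ) := by
      intro i y hy
      rcases le_or_gt i N with hi | hi
      · calc ‖y‖ ≤ (R_ i : ℝ) := hR_ i y hy
          _ ≤ (Q : ℝ) := by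
            have h8 : R_ i ≤ Q :=
              le_trans (Finset.le_sup (Finset.mem_range.2 (by omega))) le_sup_left
            exact_mod_cast h8
      · calc ‖y‖ ≤ (R0n : ℝ) + 1 := hQex i (by omega) y hy
          _ ≤ (Q : ℝ) := by
            have h9 : (R0n + 1 : ℝ≥0) ≤ Q := le_sup_right
            calc ((R0n:ℝ) + 1) = ((R0n + 1 : ℝ≥0) : ℝ) := by push_cast; ring
              _ ≤ (Q:ℝ) := by exact_mod_cast h9
    have hfe_ : ∀ i, homExt (h_ i) = suppFn (K_ i) := fun i =>
      TauProofAux.homExt_eq_suppFn (hK_ i) (hhK_ i)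
    have hfe : homExt h = suppFn K := TauProofAux.homExt_eq_suppFn hK hhK
    have hptw : ∀ z : Eucl (m+1), Tendsto (fun i => suppFn (K_ i) z) atTop (𝓝 (suppFn K z)) := by
      intro z
      rcases eq_or_ne z 0 with rfl | hz
      · have h10 : (fun i => suppFn (K_ i) (0:Eucl (m+1))) = fun _ => (0:ℝ) :=
          funext fun i => TauProofAux.suppFn_zero (hK_ i)
        rw [h10, TauProofAux.suppFn_zero hK]
        exact tendsto_const_nhds
      · set zs : Sph (m+1) := ⟨‖z‖⁻¹ • z, by
          rw [mem_sphere_zero_iff_norm, norm_smul, norm_inv, norm_norm,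
            inv_mul_cancel₀ (norm_ne_zero_iff.mpr hz)]⟩ with hzs
        have hzse : ∀ u : Sph (m+1) → ℝ, homExt u z = ‖z‖ * u zs := fun u =>
          TauProofAux.homExt_apply_ne u hz
        have h11 : (fun i => suppFn (K_ i) z) = fun i => ‖z‖ * h_ i zs := by
          funext i
          rw [← hfe_ i, hzse]
        rw [h11, show suppFn K z = ‖z‖ * h zs by rw [← hfe, hzse]]
        exact (hunif.tendsto_at zs).const_mul ‖z‖
    have hae : ∀ᵐ x ∂sphMeasure (m+1),
        Tendsto (fun i => sphGrad (h_ i) x) atTop (𝓝 (sphGrad h x)) := by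
      have hbadnull : sphMeasure (m+1)
          ({x : Sph (m+1) |
              (x:Eucl (m+1)) ∈ {z : Eucl (m+1) | ¬ DifferentiableAt ℝ (suppFn K) z}}
            ∪ ⋃ i, {x : Sph (m+1) |
              (x:Eucl (m+1)) ∈ {z : Eucl (m+1) | ¬ DifferentiableAt ℝ (suppFn (K_ i)) z}}) = 0 := by
        apply measure_union_null
        · exact TauProofAux.sphere_null (TauProofAux.nondiff_null hK) (TauProofAux.nondiff_cone hK)
        · exact measure_iUnion_null fun i =>
            TauProofAux.sphere_null (TauProofAux.nondiff_null (hK_ i))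
              (TauProofAux.nondiff_cone (hK_ i))
      rw [ae_iff]
      refine measure_mono_null (fun x hx => ?_) hbadnull
      simp only [mem_setOf_eq] at hx
      by_contra hxbad
      simp only [mem_union, mem_iUnion, mem_setOf_eq, not_or, not_exists, not_not] at hxbad
      obtain ⟨hd, hd_⟩ := hxbad
      apply hx
      have hgrad := TauProofAux.gradient_tendsto (fun i => TauProofAux.suppFn_convexOn (hK_ i))
        (TauProofAux.suppFn_convexOn hK) hptw (x := (x:Eucl (m+1))) hd_ hd
      have hval : Tendsto (fun i => h_ i x) atTop (𝓝 (h x)) := hunif.tendsto_at x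
      have h12 := hgrad.sub (hval.smul_const ((x:Eucl (m+1)) : Eucl (m+1)))
      have hrw2 : ∀ i, sphGrad (h_ i) x
          = gradient (suppFn (K_ i)) (x:Eucl (m+1)) - h_ i x • (x:Eucl (m+1)) := fun i => by
        rw [sphGrad, hfe_ i]
      have hrw3 : sphGrad h x = gradient (suppFn K) (x:Eucl (m+1)) - h x • (x:Eucl (m+1)) := by
        rw [sphGrad, hfe]
      simp only [hrw2, hrw3]
      exact h12
    have hbound : ∀ i, ∀ᵐ x ∂sphMeasure (m+1), ‖sphGrad (h_ i) x‖ ≤ 2 * (Q:ℝ) + 1 := by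
      intro i
      apply ae_of_all
      intro x
      have h13 := TauProofAux.sphGrad_bound (hK_ i) (hQ i) (hhK_ i) x
      linarith
    exact hτ h_ h hsr_ hsr ⟨hunif, hae, 2*(Q:ℝ)+1, by positivity, hbound⟩
  · intro huc h_ h hh_ hh htau
    exact huc h_ h hh_ hh htau.1
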